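/- Let n ≥ 3 be an integer, m = n − 1, and ρ = 1/(m+1) = 1/n. Then there is no solution (x, y) of the system (S_ρ) on all of ℝ such that x′(t) < 0 and 0 < x(t) < 1 for every t ∈ ℝ and (x(t), y(t)) → (1, 0) as t → −∞. -/

import Mathlib

/-- `IsEinsteinSystemSol m ρ x y` means the pair of differentiable functions `(x, y)` solves
the planar system `(S_ρ)`:
`(1 − 2mρ)·x′ = (m−1)(1−mρ)(1 − x²) − x·y` and
`(1 − 2mρ)·y′ = −m(m−1)(1−(m+1)ρ)(1 − x²) + (1 + m − 4mρ)·x·y`,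
arising from rotationally symmetric gradient steady ρ-Einstein solitons. -/
def IsEinsteinSystemSol (m ρ : ℝ) (x y : ℝ → ℝ) : Prop :=
  Differentiable ℝ x ∧ Differentiable ℝ y ∧
    (∀ t : ℝ, (1 - 2 * m * ρ) * deriv x t =
      (m - 1) * (1 - m * ρ) * (1 - x t ^ 2) - x t * y t) ∧
    (∀ t : ℝ, (1 - 2 * m * ρ) * deriv y t =
      -(m * (m - 1) * (1 - (m + 1) * ρ) * (1 - x t ^ 2)) + (1 + m - 4 * m * ρ) * x t * y t)

/-- Case 5 of Theorem 4.2: for `ρ = 1/(m+1) = 1/n` there is no global trajectory of the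
system `(S_ρ)` with `x′ < 0`, `0 < x < 1` emanating from the equilibrium `(1,0)` at `t = -∞`. -/
theorem no_steady_soliton_trajectory_case5 (n : ℕ) (hn : 3 ≤ n) (m ρ : ℝ)
    (hm : m = (n : ℝ) - 1) (hρ : ρ = 1 / (m + 1)) :
    ¬ ∃ x y : ℝ → ℝ, IsEinsteinSystemSol m ρ x y ∧
      (∀ t : ℝ, deriv x t < 0) ∧ (∀ t : ℝ, 0 < x t ∧ x t < 1) ∧
      Filter.Tendsto (fun t => (x t, y t)) Filter.atBot (nhds (1, 0)) := by
  rintro ⟨x, y, ⟨hdx, hdy, heq1, heq2⟩, hx'neg, hxbd, htend⟩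
  have hn3 : (3 : ℝ) ≤ (n : ℝ) := by exact_mod_cast hn
  have hm2 : (2 : ℝ) ≤ m := by rw [hm]; linarith
  have hm1 : m - 1 ≠ 0 := by linarith
  have hmp1 : m + 1 ≠ 0 := by linarith
  -- y' = -(m-1) x y
  have hy' : ∀ t, deriv y t = -((m - 1) * (x t * y t)) := by
    intro t
    have h := heq2 t
    rw [hρ] at h
    field_simp at h
    -- solve the linear equation
    have key : (m - 1) * deriv y t = (m - 1) * (-((m - 1) * (x t * y t))) := by
      ring_nf; ring_nf at h; linarith
    exact mul_left_cancel₀ hm1 key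
  -- continuity of x
  have hxc : Continuous x := hdx.continuous
  -- antiderivative of x
  set X : ℝ → ℝ := fun u => ∫ s in (0:ℝ)..u, x s with hXdef
  have hX : ∀ t, HasDerivAt X (x t) t := fun t =>
    intervalIntegral.integral_hasDerivAt_right (hxc.intervalIntegrable _ _)
      (hxc.stronglyMeasurableAtFilter _ _) hxc.continuousAt
  -- g = y * exp((m-1) X) has zero derivative
  set E : ℝ → ℝ := fun u => Real.exp ((m - 1) * X u) with hEdef
  have hE : ∀ t, HasDerivAt E (E t * ((m - 1) * x t)) t := by
    intro t
    have h1 : HasDerivAt (fun u => (m - 1) * X u) ((m - 1) * x t) t := (hX t).const_mul _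
    exact h1.exp
  set g : ℝ → ℝ := fun u => y u * E u with hgdef
  have hg : ∀ t, HasDerivAt g 0 t := by
    intro t
    have h := ((hdy t).hasDerivAt).mul (hE t)
    have : deriv y t * E t + y t * (E t * ((m - 1) * x t)) = 0 := by
      rw [hy' t]; ring
    rwa [this] at h
  have hgc : ∀ t, g t = g 0 :=
    fun t => is_const_of_deriv_eq_zero (fun u => (hg u).differentiableAt)
      (fun u => (hg u).deriv) t 0
  have hX0 : X 0 = 0 := intervalIntegral.integral_same
  have hE0 : E 0 = 1 := by simp [hEdef, hX0]
  -- y tends to 0 at -∞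
  have hytend : Filter.Tendsto y Filter.atBot (nhds 0) := by
    have := htend
    rw [nhds_prod_eq] at this
    exact this.snd
  -- y 0 = 0
  have hy0 : y 0 = 0 := by
    by_contra hne
    have habs : (0:ℝ) < |y 0| := abs_pos.mpr hne
    have hev : ∀ᶠ t in Filter.atBot, |y t| < |y 0| := by
      have := Metric.tendsto_nhds.mp hytend (|y 0|) habs
      simpa [Real.dist_eq] using this
    obtain ⟨a, ha⟩ := Filter.eventually_atBot.mp hev
    set t := min a 0 with htdef
    have ht0 : t ≤ 0 := min_le_right _ _
    have hta : t ≤ a := min_le_left _ _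
    have hlt : |y t| < |y 0| := ha t hta
    -- but |y t| ≥ |y 0| since E t ≤ 1
    have hXt : X t ≤ 0 := by
      have : (0:ℝ) ≤ ∫ s in t..(0:ℝ), x s :=
        intervalIntegral.integral_nonneg ht0 (fun u _ => (hxbd u).1.le)
      have hswap : X t = -∫ s in t..(0:ℝ), x s := intervalIntegral.integral_symm t 0
      linarith [hswap, this]
    have hEt1 : E t ≤ 1 := by
      have : (m - 1) * X t ≤ 0 := mul_nonpos_of_nonneg_of_nonpos (by linarith) hXt
      simpa [hEdef] using Real.exp_le_one_iff.mpr this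
    have hEtpos : 0 < E t := Real.exp_pos _
    have hgt : y t * E t = y 0 := by
      have := hgc t
      simpa [hgdef, hE0] using this
    have : |y 0| = |y t| * E t := by
      rw [← hgt, abs_mul, abs_of_pos hEtpos]
    nlinarith [abs_nonneg (y t)]
  -- hence y ≡ 0
  have hyzero : ∀ t, y t = 0 := by
    intro t
    have hgt : y t * E t = y 0 * 1 := by
      have := hgc t
      simpa [hgdef, hE0] using this
    have hEtpos : (0:ℝ) < E t := Real.exp_pos _
    rw [hy0, zero_mul] at hgt
    exact (mul_eq_zero.mp hgt).resolve_right hEtpos.ne'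
  -- x' = x^2 - 1
  have hx' : ∀ t, deriv x t = x t ^ 2 - 1 := by
    intro t
    have h := heq1 t
    rw [hρ, hyzero t] at h
    field_simp at h
    have key : (m - 1) * deriv x t = (m - 1) * (x t ^ 2 - 1) := by ring_nf; ring_nf at h; linarith
    exact mul_left_cancel₀ hm1 key
  -- x is antitone
  have hanti : Antitone x := antitone_of_deriv_nonpos hdx (fun t => (hx'neg t).le)
  -- MVT contradiction
  obtain ⟨hx0pos, hx0lt1⟩ := hxbd 0
  have hden : (0:ℝ) < 1 - x 0 ^ 2 := by nlinarith
  set T : ℝ := (x 0 + 1) / (1 - x 0 ^ 2) with hTdef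
  have hTpos : 0 < T := div_pos (by linarith) hden
  obtain ⟨c, hc, hslope⟩ := exists_hasDerivAt_eq_slope x (deriv x) hTpos
    hxc.continuousOn (fun u _ => (hdx u).hasDerivAt)
  have hxc0 : x c ≤ x 0 := hanti hc.1.le
  have hxcpos : 0 < x c := (hxbd c).1
  have hderc : deriv x c ≤ x 0 ^ 2 - 1 := by
    rw [hx' c]; nlinarith
  have hxT : x T - x 0 = T * deriv x c := by
    rw [hslope, sub_zero]; field_simp
  have hxTneg : x T < 0 := by
    have hT1 : T * (x 0 ^ 2 - 1) = -(x 0 + 1) := by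
      rw [hTdef]; field_simp; ring
    nlinarith [hxT, mul_le_mul_of_nonneg_left hderc hTpos.le]
  exact absurd (hxbd T).1 (not_lt.mpr hxTneg.le)
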